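/- Let A be a unital C*-algebra of real rank zero, let Z be a Hausdorff topological vector space, and let φ : A × A → Z be a continuous bilinear map such that φ(e, 1 − e) = 0 for every projection e ∈ A. Then φ(a,1) = φ(1,a) for every a ∈ A. -/

import Mathlib

lemma mem_span_proj {A : Type*} [CStarAlgebra A] {a : A} (ha : IsSelfAdjoint a)
    (hfin : (spectrum ℝ a).Finite) :
    a ∈ Submodule.span ℂ {e : A | IsSelfAdjoint e ∧ IsIdempotentElem e} := by
  classical
  set s : Finset ℝ := hfin.toFinset with hs
  set f : ℝ → ℝ → ℝ := fun μ x => if x = μ then (1 : ℝ) else 0 with hf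
  have hcf : ∀ g : ℝ → ℝ, ContinuousOn g (spectrum ℝ a) := fun g => hfin.continuousOn g
  have key : a = ∑ μ ∈ s, μ • cfc (f μ) a := by
    have h1 : ∀ μ ∈ s, μ • cfc (f μ) a = cfc (fun x => μ • f μ x) a := by
      intro μ _
      exact (cfc_smul μ (f μ) a (hcf _)).symm
    rw [Finset.sum_congr rfl h1, ← cfc_sum (fun μ x => μ • f μ x) a s (fun μ _ => hcf _)]
    conv_lhs => rw [← cfc_id ℝ a]
    apply cfc_congr
    intro x hx
    have hxs : x ∈ s := hfin.mem_toFinset.mpr hx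
    show id x = (∑ μ ∈ s, fun x => μ • f μ x) x
    simp only [id_eq, Finset.sum_apply, hf, smul_eq_mul]
    rw [Finset.sum_eq_single x]
    · simp
    · intro b _ hb
      simp [Ne.symm hb]
    · intro hxx; exact absurd hxs hxx
  rw [key]
  apply Submodule.sum_mem
  intro μ _
  apply Submodule.smul_of_tower_mem
  apply Submodule.subset_span
  refine ⟨cfc_predicate _ a, ?_⟩
  show cfc (f μ) a * cfc (f μ) a = cfc (f μ) a
  rw [← cfc_mul (f μ) (f μ) a (hcf _) (hcf _)]
  apply cfc_congr
  intro x _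
  simp only [hf]
  by_cases hxμ : x = μ <;> simp [hxμ]

/-- Let `A` be a unital C*-algebra of real rank zero
(the self-adjoint elements with finite spectrum are norm-dense in the self-adjoint
elements), let `Z` be a Hausdorff topological vector space, and let
`φ : A × A → Z` be a continuous bilinear map such that `φ(e, 1 − e) = 0` for every
projection `e ∈ A`.  Then `φ(a,1) = φ(1,a)` for every `a ∈ A`. -/
theorem stmt1 {A Z : Type*} [CStarAlgebra A]
    [AddCommGroup Z] [Module ℂ Z] [TopologicalSpace Z] [IsTopologicalAddGroup Z]
    [ContinuousSMul ℂ Z] [T2Space Z]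
    (hRR0 : ∀ a : A, IsSelfAdjoint a →
      a ∈ closure {b : A | IsSelfAdjoint b ∧ (spectrum ℂ b).Finite})
    (φ : A →ₗ[ℂ] A →ₗ[ℂ] Z)
    (hcont : Continuous fun p : A × A => φ p.1 p.2)
    (h : ∀ e : A, IsSelfAdjoint e → IsIdempotentElem e → φ e (1 - e) = 0) :
    ∀ a : A, φ a 1 = φ 1 a := by
  have hproj : ∀ e : A, IsSelfAdjoint e → IsIdempotentElem e → φ e 1 = φ 1 e := by
    intro e he hie
    have h1 := h e he hie
    have h2 := h (1 - e) ((IsSelfAdjoint.one A).sub he) hie.one_sub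
    rw [map_sub] at h1
    rw [show ((1 : A) - (1 - e)) = e by abel, map_sub, LinearMap.sub_apply] at h2
    rw [sub_eq_zero] at h1 h2
    rw [h1, h2]
  set ψ : A →ₗ[ℂ] Z := φ.flip 1 - φ 1 with hψdef
  have hψc : Continuous ψ := by
    have c1 : Continuous fun a : A => φ a 1 :=
      hcont.comp (continuous_id.prodMk continuous_const)
    have c2 : Continuous fun a : A => φ 1 a :=
      hcont.comp (continuous_const.prodMk continuous_id)
    exact c1.sub c2
  have hker : {e : A | IsSelfAdjoint e ∧ IsIdempotentElem e} ⊆ (LinearMap.ker ψ : Set A) := by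
    rintro e ⟨h1, h2⟩
    simp only [SetLike.mem_coe, LinearMap.mem_ker, hψdef, LinearMap.sub_apply,
      LinearMap.flip_apply, sub_eq_zero]
    exact hproj e h1 h2
  have hspan : ∀ b ∈ Submodule.span ℂ {e : A | IsSelfAdjoint e ∧ IsIdempotentElem e}, ψ b = 0 :=
    fun b hb => (Submodule.span_le.mpr hker) hb
  have hsa : ∀ a : A, IsSelfAdjoint a → ψ a = 0 := by
    intro a ha
    have hclosed : IsClosed {x : A | ψ x = 0} := isClosed_eq hψc continuous_const
    refine hclosed.closure_subset_iff.mpr ?_ (hRR0 a ha)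
    rintro b ⟨hb1, hb2⟩
    have hfinR : (spectrum ℝ b).Finite := by
      rw [← spectrum.preimage_algebraMap ℂ]
      exact hb2.preimage ((algebraMap ℝ ℂ).injective.injOn)
    exact hspan b (mem_span_proj hb1 hfinR)
  intro a
  have h1 := hsa (realPart a : A) (realPart a).2
  have h2 := hsa (imaginaryPart a : A) (imaginaryPart a).2
  have hdecomp : (realPart a : A) + Complex.I • (imaginaryPart a : A) = a :=
    realPart_add_I_smul_imaginaryPart a
  have : ψ a = 0 := by
    rw [← hdecomp, map_add, map_smul, h1, h2, smul_zero, add_zero]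
  simpa [hψdef, sub_eq_zero] using this
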